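/- Let f be continuous on [0,1]³ satisfying the strict mixed-difference conditions, and let (p,λ) be an optimal projection cycle-vector for f on a finite grid S = S_x × S_y × S_z with {0,1} ⊂ S_x ∩ S_y ∩ S_z. Then both (0,0,0) and (1,1,1) belong to p and both carry positive weights. -/

import Mathlib

open Set Finset

/-- Two points of `ℝ³` are well-ordered if one dominates the other coordinatewise. -/
def WellOrdered3 (a b : ℝ × ℝ × ℝ) : Prop :=
  (a.1 ≤ b.1 ∧ a.2.1 ≤ b.2.1 ∧ a.2.2 ≤ b.2.2) ∨
  (b.1 ≤ a.1 ∧ b.2.1 ≤ a.2.1 ∧ b.2.2 ≤ a.2.2)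

/-- All second mixed differences of `f` (with positive increments, inside the unit
cube) in any two distinct variables are strictly positive. -/
def StrictMixed (f : ℝ → ℝ → ℝ → ℝ) : Prop :=
  (∀ u u' v v' w, u ∈ Set.Icc (0:ℝ) 1 → u' ∈ Set.Icc (0:ℝ) 1 → v ∈ Set.Icc (0:ℝ) 1 →
    v' ∈ Set.Icc (0:ℝ) 1 → w ∈ Set.Icc (0:ℝ) 1 → u < u' → v < v' →
    0 < f u' v' w - f u' v w - f u v' w + f u v w) ∧
  (∀ u u' w w' v, u ∈ Set.Icc (0:ℝ) 1 → u' ∈ Set.Icc (0:ℝ) 1 → w ∈ Set.Icc (0:ℝ) 1 →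
    w' ∈ Set.Icc (0:ℝ) 1 → v ∈ Set.Icc (0:ℝ) 1 → u < u' → w < w' →
    0 < f u' v w' - f u' v w - f u v w' + f u v w) ∧
  (∀ v v' w w' u, v ∈ Set.Icc (0:ℝ) 1 → v' ∈ Set.Icc (0:ℝ) 1 → w ∈ Set.Icc (0:ℝ) 1 →
    w' ∈ Set.Icc (0:ℝ) 1 → u ∈ Set.Icc (0:ℝ) 1 → v < v' → w < w' →
    0 < f u v' w' - f u v' w - f u v w' + f u v w)

/-- A projection cycle-vector in `ℝ³`: finitely many pairwise distinct points with
nonzero weights, the sums of the weights over every plane `x = ξ`, `y = ξ`, `z = ξ`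
being zero. -/
def IsPCV (m : ℕ) (x : Fin m → ℝ × ℝ × ℝ) (lam : Fin m → ℝ) : Prop :=
  Function.Injective x ∧ (∀ i, lam i ≠ 0) ∧
  (∀ ξ : ℝ, ∑ i, (if (x i).1 = ξ then lam i else 0) = 0) ∧
  (∀ ξ : ℝ, ∑ i, (if (x i).2.1 = ξ then lam i else 0) = 0) ∧
  (∀ ξ : ℝ, ∑ i, (if (x i).2.2 = ξ then lam i else 0) = 0)

/-- The normalized weighted sum `Σ λᵢ f(xᵢ) / Σ |λᵢ|`. -/
noncomputable def pcvRatio (m : ℕ) (x : Fin m → ℝ × ℝ × ℝ) (lam : Fin m → ℝ)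
    (f : ℝ → ℝ → ℝ → ℝ) : ℝ :=
  (∑ i, lam i * f (x i).1 (x i).2.1 (x i).2.2) / (∑ i, |lam i|)

/-- All points lie in the grid `Sx × Sy × Sz`. -/
def PointsIn (m : ℕ) (x : Fin m → ℝ × ℝ × ℝ) (Sx Sy Sz : Finset ℝ) : Prop :=
  ∀ i, (x i).1 ∈ Sx ∧ (x i).2.1 ∈ Sy ∧ (x i).2.2 ∈ Sz

/-- `(p,λ)` is an optimal projection cycle-vector for `f` on the grid `Sx × Sy × Sz`:
it maximizes `Σ λᵢ f(xᵢ)/Σ|λᵢ|` among all projection cycle-vectors with points in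
the grid. -/
def OptimalPCV (Sx Sy Sz : Finset ℝ) (f : ℝ → ℝ → ℝ → ℝ)
    (m : ℕ) (x : Fin m → ℝ × ℝ × ℝ) (lam : Fin m → ℝ) : Prop :=
  IsPCV m x lam ∧ PointsIn m x Sx Sy Sz ∧
  ∀ (m' : ℕ) (x' : Fin m' → ℝ × ℝ × ℝ) (lam' : Fin m' → ℝ),
    IsPCV m' x' lam' → PointsIn m' x' Sx Sy Sz →
    pcvRatio m' x' lam' f ≤ pcvRatio m x lam f


noncomputable def lam0 (m : ℕ) (x : Fin m → ℝ × ℝ × ℝ) (lam : Fin m → ℝ)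
    (p : ℝ × ℝ × ℝ) : ℝ :=
  ∑ i, if x i = p then lam i else 0

lemma ite_comm0 {c d : Prop} [Decidable c] [Decidable d] (a : ℝ) :
    (if c then (if d then a else 0) else 0) = (if d then (if c then a else 0) else 0) := by
  split_ifs <;> rfl

lemma lam0_apply {m : ℕ} {x : Fin m → ℝ × ℝ × ℝ} {lam : Fin m → ℝ}
    (hinj : Function.Injective x) (i : Fin m) : lam0 m x lam (x i) = lam i := by
  classical
  rw [lam0, Finset.sum_eq_single i (fun j _ hji => by
    have : x j ≠ x i := fun h => hji (hinj h)
    simp [this]) (fun h => absurd (Finset.mem_univ i) h)]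
  simp

lemma lam0_not_mem {m : ℕ} {x : Fin m → ℝ × ℝ × ℝ} {lam : Fin m → ℝ}
    {p : ℝ × ℝ × ℝ} (h : ∀ i, x i ≠ p) : lam0 m x lam p = 0 := by
  rw [lam0]
  exact Finset.sum_eq_zero (fun i _ => by simp [h i])

lemma lam0_plane {m : ℕ} {x : Fin m → ℝ × ℝ × ℝ} {lam : Fin m → ℝ}
    {G : Finset (ℝ × ℝ × ℝ)} (hmem : ∀ i, x i ∈ G) (π : ℝ × ℝ × ℝ → ℝ)
    (h : ∀ ξ : ℝ, ∑ i, (if π (x i) = ξ then lam i else 0) = 0) (ξ : ℝ) :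
    ∑ p ∈ G, (if π p = ξ then lam0 m x lam p else 0) = 0 := by
  classical
  have step1 : ∀ p ∈ G, (if π p = ξ then lam0 m x lam p else 0)
      = ∑ i, (if x i = p then (if π p = ξ then lam i else 0) else 0) := by
    intro p _
    rw [lam0]
    split_ifs with h1
    · simp [h1]
    · simp [h1]
  rw [Finset.sum_congr rfl step1, Finset.sum_comm]
  have step2 : ∀ i : Fin m,
      (∑ p ∈ G, if x i = p then (if π p = ξ then lam i else 0) else 0)
      = (if π (x i) = ξ then lam i else 0) := by
    intro i
    rw [Finset.sum_ite_eq G (x i) (fun p => if π p = ξ then lam i else 0)]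
    simp [hmem i]
  rw [Finset.sum_congr rfl (fun i _ => step2 i)]
  exact h ξ

lemma lam0_mul_sum {m : ℕ} {x : Fin m → ℝ × ℝ × ℝ} {lam : Fin m → ℝ}
    {G : Finset (ℝ × ℝ × ℝ)} (hmem : ∀ i, x i ∈ G) (g : ℝ × ℝ × ℝ → ℝ) :
    ∑ p ∈ G, lam0 m x lam p * g p = ∑ i, lam i * g (x i) := by
  classical
  have step1 : ∀ p ∈ G, lam0 m x lam p * g p
      = ∑ i, (if x i = p then lam i * g p else 0) := by
    intro p _
    rw [lam0, Finset.sum_mul]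
    exact Finset.sum_congr rfl (fun i _ => by split_ifs <;> simp)
  rw [Finset.sum_congr rfl step1, Finset.sum_comm]
  refine Finset.sum_congr rfl (fun i _ => ?_)
  rw [Finset.sum_ite_eq G (x i) (fun p => lam i * g p)]
  simp [hmem i]

lemma lam0_abs_sum {m : ℕ} {x : Fin m → ℝ × ℝ × ℝ} {lam : Fin m → ℝ}
    {G : Finset (ℝ × ℝ × ℝ)} (hinj : Function.Injective x) (hmem : ∀ i, x i ∈ G) :
    ∑ p ∈ G, |lam0 m x lam p| = ∑ i, |lam i| := by
  classical
  have key : ∀ p, |lam0 m x lam p| = lam0 m x (fun i => |lam i|) p := by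
    intro p
    by_cases h : ∃ i, x i = p
    · obtain ⟨i, rfl⟩ := h
      rw [lam0_apply hinj i, lam0_apply hinj i]
    · push_neg at h
      rw [lam0_not_mem h, lam0_not_mem h, abs_zero]
  rw [Finset.sum_congr rfl (fun p _ => key p)]
  have := lam0_mul_sum (lam := fun i => |lam i|) hmem (fun _ => 1)
  simpa using this

lemma master (f : ℝ → ℝ → ℝ → ℝ) (Sx Sy Sz : Finset ℝ)
    (m : ℕ) (x : Fin m → ℝ × ℝ × ℝ) (lam : Fin m → ℝ)
    (hopt : OptimalPCV Sx Sy Sz f m x lam)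
    (hM : 0 ≤ pcvRatio m x lam f)
    (w : ℝ × ℝ × ℝ → ℝ)
    (hx : ∀ ξ : ℝ, ∑ p ∈ Sx ×ˢ Sy ×ˢ Sz, (if p.1 = ξ then w p else 0) = 0)
    (hy : ∀ ξ : ℝ, ∑ p ∈ Sx ×ˢ Sy ×ˢ Sz, (if p.2.1 = ξ then w p else 0) = 0)
    (hz : ∀ ξ : ℝ, ∑ p ∈ Sx ×ˢ Sy ×ˢ Sz, (if p.2.2 = ξ then w p else 0) = 0) :
    ∑ p ∈ Sx ×ˢ Sy ×ˢ Sz, w p * f p.1 p.2.1 p.2.2 ≤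
      pcvRatio m x lam f * ∑ p ∈ Sx ×ˢ Sy ×ˢ Sz, |w p| := by
  classical
  set G := Sx ×ˢ Sy ×ˢ Sz with hG
  set T := G.filter (fun p => w p ≠ 0) with hT
  set n := T.card with hn
  set e : {p // p ∈ T} ≃ Fin n := T.equivFin with he
  set x' : Fin n → ℝ × ℝ × ℝ := fun k => (e.symm k : ℝ × ℝ × ℝ) with hx'
  set lam' : Fin n → ℝ := fun k => w (x' k) with hlam'
  have hmemT : ∀ k, x' k ∈ T := fun k => (e.symm k).2
  have hsum : ∀ g : ℝ × ℝ × ℝ → ℝ, ∑ k, g (x' k) = ∑ p ∈ T, g p := by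
    intro g
    rw [← Finset.sum_coe_sort T g]
    exact Equiv.sum_comp e.symm (fun t => g ↑t)
  have hTG : ∀ g : ℝ × ℝ × ℝ → ℝ, (∀ p, g p ≠ 0 → w p ≠ 0) → ∑ p ∈ T, g p = ∑ p ∈ G, g p := by
    intro g hg
    exact Finset.sum_filter_of_ne (fun p _ h => hg p h)
  have hpcv : IsPCV n x' lam' := by
    refine ⟨?_, ?_, ?_, ?_, ?_⟩
    · intro a b hab
      exact e.symm.injective (Subtype.ext hab)
    · intro k
      have := hmemT k
      rw [hT, Finset.mem_filter] at this
      exact this.2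
    · intro ξ
      exact ((hsum (fun p => if p.1 = ξ then w p else 0)).trans
        (hTG _ (fun p h => by by_contra h0; simp [h0] at h))).trans (hx ξ)
    · intro ξ
      exact ((hsum (fun p => if p.2.1 = ξ then w p else 0)).trans
        (hTG _ (fun p h => by by_contra h0; simp [h0] at h))).trans (hy ξ)
    · intro ξ
      exact ((hsum (fun p => if p.2.2 = ξ then w p else 0)).trans
        (hTG _ (fun p h => by by_contra h0; simp [h0] at h))).trans (hz ξ)
  have hpts : PointsIn n x' Sx Sy Sz := by
    intro k
    have := hmemT k
    rw [hT, Finset.mem_filter, hG] at this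
    have := this.1
    simp only [Finset.mem_product] at this
    exact ⟨this.1, this.2.1, this.2.2⟩
  have hratio := hopt.2.2 n x' lam' hpcv hpts
  have hS : (∑ k, lam' k * f (x' k).1 (x' k).2.1 (x' k).2.2) = ∑ p ∈ G, w p * f p.1 p.2.1 p.2.2 :=
    (hsum (fun p => w p * f p.1 p.2.1 p.2.2)).trans
      (hTG _ (fun p h => by by_contra h0; simp [h0] at h))
  have hN : (∑ k, |lam' k|) = ∑ p ∈ G, |w p| :=
    (hsum (fun p => |w p|)).trans
      (hTG _ (fun p h => by by_contra h0; simp [h0] at h))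
  rw [pcvRatio, hS, hN] at hratio
  have hN0 : 0 ≤ ∑ p ∈ G, |w p| := Finset.sum_nonneg (fun p _ => abs_nonneg _)
  rcases hN0.eq_or_lt with h0 | hpos
  · have : ∀ p ∈ G, w p = 0 := by
      intro p hp
      have := (Finset.sum_eq_zero_iff_of_nonneg (fun p _ => abs_nonneg (w p))).1 h0.symm p hp
      exact abs_eq_zero.1 this
    have : ∑ p ∈ G, w p * f p.1 p.2.1 p.2.2 = 0 :=
      Finset.sum_eq_zero (fun p hp => by rw [this p hp]; ring)
    rw [this, ← h0]
    simp
  · exact (div_le_iff₀ hpos).1 hratio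

lemma Mpos (f : ℝ → ℝ → ℝ → ℝ) (hf : StrictMixed f)
    (Sx Sy Sz : Finset ℝ)
    (h01 : ({0, 1} : Finset ℝ) ⊆ Sx ∩ Sy ∩ Sz)
    (m : ℕ) (x : Fin m → ℝ × ℝ × ℝ) (lam : Fin m → ℝ)
    (hopt : OptimalPCV Sx Sy Sz f m x lam) :
    0 < pcvRatio m x lam f := by
  classical
  have h0 : (0:ℝ) ∈ Sx ∩ Sy ∩ Sz := h01 (by simp)
  have h1 : (1:ℝ) ∈ Sx ∩ Sy ∩ Sz := h01 (by simp)
  simp only [Finset.mem_inter] at h0 h1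
  set x' : Fin 4 → ℝ × ℝ × ℝ := ![(0,0,0),(1,1,0),(0,1,0),(1,0,0)] with hx'
  set lam' : Fin 4 → ℝ := ![1,1,-1,-1] with hlam'
  have hpcv : IsPCV 4 x' lam' := by
    refine ⟨?_, ?_, ?_, ?_, ?_⟩
    · intro a b hab
      fin_cases a <;> fin_cases b <;> simp_all [hx', Prod.ext_iff] <;> norm_num at hab ⊢
    · intro i; fin_cases i <;> norm_num [hlam']
    · intro ξ
      simp only [Fin.sum_univ_four, hx', hlam']
      by_cases e0 : (0:ℝ) = ξ
      · subst e0; simp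
      · by_cases e1 : (1:ℝ) = ξ
        · subst e1; simp [e0]
        · simp [e0, e1]
    · intro ξ
      simp only [Fin.sum_univ_four, hx', hlam']
      by_cases e0 : (0:ℝ) = ξ
      · subst e0; simp
      · by_cases e1 : (1:ℝ) = ξ
        · subst e1; simp [e0]
        · simp [e0, e1]
    · intro ξ
      simp only [Fin.sum_univ_four, hx', hlam']
      by_cases e0 : (0:ℝ) = ξ
      · subst e0; simp
      · by_cases e1 : (1:ℝ) = ξ
        · subst e1; simp [e0]
        · simp [e0, e1]
  have hpts : PointsIn 4 x' Sx Sy Sz := by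
    intro i
    fin_cases i <;> simp [hx'] <;>
      exact ⟨by tauto, by tauto, by tauto⟩
  have hle := hopt.2.2 4 x' lam' hpcv hpts
  refine lt_of_lt_of_le ?_ hle
  have hD : 0 < f 1 1 0 - f 1 0 0 - f 0 1 0 + f 0 0 0 :=
    hf.1 0 1 0 1 0 (by norm_num) (by norm_num) (by norm_num) (by norm_num) (by norm_num)
      (by norm_num) (by norm_num)
  have : pcvRatio 4 x' lam' f
      = (f 1 1 0 - f 1 0 0 - f 0 1 0 + f 0 0 0) / 4 := by
    simp only [pcvRatio, Fin.sum_univ_succ, Fin.sum_univ_zero, hx', hlam', Matrix.cons_val_zero,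
      Matrix.cons_val_succ]
    norm_num
    ring_nf
  rw [this]
  positivity

lemma ite_expand4 {q p1 p2 p3 p4 : ℝ × ℝ × ℝ} (c1 c2 c3 c4 : ℝ) {cond : Prop}
    [Decidable cond] :
    (if cond then ((if q = p1 then c1 else 0) + (if q = p2 then c2 else 0)
      + (if q = p3 then c3 else 0) + (if q = p4 then c4 else 0)) else 0)
    = (if q = p1 then (if cond then c1 else 0) else 0)
    + (if q = p2 then (if cond then c2 else 0) else 0)
    + (if q = p3 then (if cond then c3 else 0) else 0)
    + (if q = p4 then (if cond then c4 else 0) else 0) := by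
  split_ifs <;> ring

lemma ite_add_mul4 {cond : Prop} [Decidable cond] (a b ε : ℝ) :
    (if cond then a + ε * b else 0)
    = (if cond then a else 0) + ε * (if cond then b else 0) := by
  split_ifs <;> ring

lemma mul_expand4 {q p1 p2 p3 p4 : ℝ × ℝ × ℝ} (c1 c2 c3 c4 Fq : ℝ) :
    ((if q = p1 then c1 else 0) + (if q = p2 then c2 else 0)
      + (if q = p3 then c3 else 0) + (if q = p4 then c4 else 0)) * Fq
    = (if q = p1 then c1 * Fq else 0) + (if q = p2 then c2 * Fq else 0)
    + (if q = p3 then c3 * Fq else 0) + (if q = p4 then c4 * Fq else 0) := by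
  split_ifs <;> ring


lemma pert (f : ℝ → ℝ → ℝ → ℝ) (Sx Sy Sz : Finset ℝ)
    (m : ℕ) (x : Fin m → ℝ × ℝ × ℝ) (lam : Fin m → ℝ)
    (hopt : OptimalPCV Sx Sy Sz f m x lam)
    (hM : 0 < pcvRatio m x lam f)
    (p1 p2 p3 p4 : ℝ × ℝ × ℝ)
    (hp1 : p1 ∈ Sx ×ˢ Sy ×ˢ Sz) (hp2 : p2 ∈ Sx ×ˢ Sy ×ˢ Sz)
    (hp3 : p3 ∈ Sx ×ˢ Sy ×ˢ Sz) (hp4 : p4 ∈ Sx ×ˢ Sy ×ˢ Sz)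
    (hd12 : p1 ≠ p2) (hd13 : p1 ≠ p3) (hd14 : p1 ≠ p4)
    (hd23 : p2 ≠ p3) (hd24 : p2 ≠ p4) (hd34 : p3 ≠ p4)
    (c1 c2 c3 c4 : ℝ)
    (hpx : ∀ ξ : ℝ, (if p1.1 = ξ then c1 else 0) + (if p2.1 = ξ then c2 else 0)
      + (if p3.1 = ξ then c3 else 0) + (if p4.1 = ξ then c4 else 0) = 0)
    (hpy : ∀ ξ : ℝ, (if p1.2.1 = ξ then c1 else 0) + (if p2.2.1 = ξ then c2 else 0)
      + (if p3.2.1 = ξ then c3 else 0) + (if p4.2.1 = ξ then c4 else 0) = 0)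
    (hpz : ∀ ξ : ℝ, (if p1.2.2 = ξ then c1 else 0) + (if p2.2.2 = ξ then c2 else 0)
      + (if p3.2.2 = ξ then c3 else 0) + (if p4.2.2 = ξ then c4 else 0) = 0)
    (ε : ℝ) (hε : 0 < ε)
    (hnorm : |lam0 m x lam p1 + ε * c1| + |lam0 m x lam p2 + ε * c2|
      + |lam0 m x lam p3 + ε * c3| + |lam0 m x lam p4 + ε * c4|
      ≤ |lam0 m x lam p1| + |lam0 m x lam p2| + |lam0 m x lam p3| + |lam0 m x lam p4|)
    (hgain : 0 < c1 * f p1.1 p1.2.1 p1.2.2 + c2 * f p2.1 p2.2.1 p2.2.2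
      + c3 * f p3.1 p3.2.1 p3.2.2 + c4 * f p4.1 p4.2.1 p4.2.2) : False := by
  classical
  set G := Sx ×ˢ Sy ×ˢ Sz with hG
  set L : ℝ × ℝ × ℝ → ℝ := lam0 m x lam with hL
  set ν : ℝ × ℝ × ℝ → ℝ := fun q => (if q = p1 then c1 else 0) + (if q = p2 then c2 else 0)
    + (if q = p3 then c3 else 0) + (if q = p4 then c4 else 0) with hν
  set w : ℝ × ℝ × ℝ → ℝ := fun q => L q + ε * ν q with hw
  obtain ⟨⟨hinj, hne, hsx, hsy, hsz⟩, hpts, hbest⟩ := hopt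
  have hmem : ∀ i, x i ∈ G := by
    intro i
    have := hpts i
    simp only [hG, Finset.mem_product]
    exact ⟨this.1, this.2.1, this.2.2⟩
  -- plane sums of ν
  have hνplane : ∀ (π : ℝ × ℝ × ℝ → ℝ),
      (∀ ξ : ℝ, (if π p1 = ξ then c1 else 0) + (if π p2 = ξ then c2 else 0)
        + (if π p3 = ξ then c3 else 0) + (if π p4 = ξ then c4 else 0) = 0) →
      ∀ ξ : ℝ, ∑ q ∈ G, (if π q = ξ then ν q else 0) = 0 := by
    intro π hπ ξ
    have expand : ∀ q ∈ G, (if π q = ξ then ν q else 0)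
        = (if q = p1 then (if π q = ξ then c1 else 0) else 0)
        + (if q = p2 then (if π q = ξ then c2 else 0) else 0)
        + (if q = p3 then (if π q = ξ then c3 else 0) else 0)
        + (if q = p4 then (if π q = ξ then c4 else 0) else 0) := by
      intro q _
      exact ite_expand4 c1 c2 c3 c4
    rw [Finset.sum_congr rfl expand]
    rw [Finset.sum_add_distrib, Finset.sum_add_distrib, Finset.sum_add_distrib]
    rw [Finset.sum_ite_eq' G p1 (fun q => if π q = ξ then c1 else 0),
      Finset.sum_ite_eq' G p2 (fun q => if π q = ξ then c2 else 0),
      Finset.sum_ite_eq' G p3 (fun q => if π q = ξ then c3 else 0),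
      Finset.sum_ite_eq' G p4 (fun q => if π q = ξ then c4 else 0)]
    simp only [hp1, hp2, hp3, hp4, if_true]
    exact hπ ξ
  -- plane sums of w
  have hwx : ∀ ξ : ℝ, ∑ q ∈ G, (if q.1 = ξ then w q else 0) = 0 := by
    intro ξ
    have expand : ∀ q ∈ G, (if q.1 = ξ then w q else 0)
        = (if q.1 = ξ then L q else 0) + ε * (if q.1 = ξ then ν q else 0) := by
      intro q _; exact ite_add_mul4 (L q) (ν q) ε
    rw [Finset.sum_congr rfl expand, Finset.sum_add_distrib, ← Finset.mul_sum,
      lam0_plane hmem (fun q => q.1) hsx ξ, hνplane (fun q => q.1) hpx ξ]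
    ring
  have hwy : ∀ ξ : ℝ, ∑ q ∈ G, (if q.2.1 = ξ then w q else 0) = 0 := by
    intro ξ
    have expand : ∀ q ∈ G, (if q.2.1 = ξ then w q else 0)
        = (if q.2.1 = ξ then L q else 0) + ε * (if q.2.1 = ξ then ν q else 0) := by
      intro q _; exact ite_add_mul4 (L q) (ν q) ε
    rw [Finset.sum_congr rfl expand, Finset.sum_add_distrib, ← Finset.mul_sum,
      lam0_plane hmem (fun q => q.2.1) hsy ξ, hνplane (fun q => q.2.1) hpy ξ]
    ring
  have hwz : ∀ ξ : ℝ, ∑ q ∈ G, (if q.2.2 = ξ then w q else 0) = 0 := by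
    intro ξ
    have expand : ∀ q ∈ G, (if q.2.2 = ξ then w q else 0)
        = (if q.2.2 = ξ then L q else 0) + ε * (if q.2.2 = ξ then ν q else 0) := by
      intro q _; exact ite_add_mul4 (L q) (ν q) ε
    rw [Finset.sum_congr rfl expand, Finset.sum_add_distrib, ← Finset.mul_sum,
      lam0_plane hmem (fun q => q.2.2) hsz ξ, hνplane (fun q => q.2.2) hpz ξ]
    ring
  have hmaster := master f Sx Sy Sz m x lam ⟨⟨hinj, hne, hsx, hsy, hsz⟩, hpts, hbest⟩
    hM.le w hwx hwy hwz
  -- compute ∑ w f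
  have hνf : ∑ q ∈ G, ν q * f q.1 q.2.1 q.2.2
      = c1 * f p1.1 p1.2.1 p1.2.2 + c2 * f p2.1 p2.2.1 p2.2.2
      + c3 * f p3.1 p3.2.1 p3.2.2 + c4 * f p4.1 p4.2.1 p4.2.2 := by
    have expand : ∀ q ∈ G, ν q * f q.1 q.2.1 q.2.2
        = (if q = p1 then c1 * f q.1 q.2.1 q.2.2 else 0)
        + (if q = p2 then c2 * f q.1 q.2.1 q.2.2 else 0)
        + (if q = p3 then c3 * f q.1 q.2.1 q.2.2 else 0)
        + (if q = p4 then c4 * f q.1 q.2.1 q.2.2 else 0) := by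
      intro q _
      exact mul_expand4 c1 c2 c3 c4 (f q.1 q.2.1 q.2.2)
    rw [Finset.sum_congr rfl expand, Finset.sum_add_distrib, Finset.sum_add_distrib,
      Finset.sum_add_distrib,
      Finset.sum_ite_eq' G p1 (fun q => c1 * f q.1 q.2.1 q.2.2),
      Finset.sum_ite_eq' G p2 (fun q => c2 * f q.1 q.2.1 q.2.2),
      Finset.sum_ite_eq' G p3 (fun q => c3 * f q.1 q.2.1 q.2.2),
      Finset.sum_ite_eq' G p4 (fun q => c4 * f q.1 q.2.1 q.2.2)]
    simp only [hp1, hp2, hp3, hp4, if_true]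
  have hwf : ∑ q ∈ G, w q * f q.1 q.2.1 q.2.2
      = (∑ i, lam i * f (x i).1 (x i).2.1 (x i).2.2)
      + ε * (c1 * f p1.1 p1.2.1 p1.2.2 + c2 * f p2.1 p2.2.1 p2.2.2
        + c3 * f p3.1 p3.2.1 p3.2.2 + c4 * f p4.1 p4.2.1 p4.2.2) := by
    have expand : ∀ q ∈ G, w q * f q.1 q.2.1 q.2.2
        = L q * f q.1 q.2.1 q.2.2 + ε * (ν q * f q.1 q.2.1 q.2.2) := by
      intro q _; rw [hw]; ring
    rw [Finset.sum_congr rfl expand, Finset.sum_add_distrib, ← Finset.mul_sum, hνf,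
      hL, lam0_mul_sum hmem (fun q => f q.1 q.2.1 q.2.2)]
  -- norm bound
  have hν0 : ∀ q, q ≠ p1 → q ≠ p2 → q ≠ p3 → q ≠ p4 → ν q = 0 := by
    intro q h1 h2 h3 h4
    show (if q = p1 then c1 else 0) + (if q = p2 then c2 else 0)
      + (if q = p3 then c3 else 0) + (if q = p4 then c4 else 0) = 0
    simp [h1, h2, h3, h4]
  have habs : ∑ q ∈ G, |w q| ≤ ∑ i, |lam i| := by
    have split : ∑ q ∈ G, |w q| = ∑ q ∈ G, |L q| + ∑ q ∈ G, (|w q| - |L q|) := by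
      rw [← Finset.sum_add_distrib]
      exact Finset.sum_congr rfl (fun q _ => by ring)
    have hsub : ({p1, p2, p3, p4} : Finset (ℝ × ℝ × ℝ)) ⊆ G := by
      intro q hq
      simp only [Finset.mem_insert, Finset.mem_singleton] at hq
      rcases hq with rfl | rfl | rfl | rfl
      exacts [hp1, hp2, hp3, hp4]
    have hrest : ∑ q ∈ G, (|w q| - |L q|)
        = ∑ q ∈ ({p1, p2, p3, p4} : Finset (ℝ × ℝ × ℝ)), (|w q| - |L q|) := by
      refine (Finset.sum_subset hsub ?_).symm
      intro q _ hq
      simp only [Finset.mem_insert, Finset.mem_singleton, not_or] at hq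
      have : ν q = 0 := hν0 q hq.1 hq.2.1 hq.2.2.1 hq.2.2.2
      rw [hw]
      simp [this]
    have hfour : ∑ q ∈ ({p1, p2, p3, p4} : Finset (ℝ × ℝ × ℝ)), (|w q| - |L q|)
        = (|w p1| - |L p1|) + (|w p2| - |L p2|) + (|w p3| - |L p3|) + (|w p4| - |L p4|) := by
      rw [Finset.sum_insert (by simp [hd12, hd13, hd14]),
        Finset.sum_insert (by simp [hd23, hd24]),
        Finset.sum_insert (by simp [hd34]), Finset.sum_singleton]
      ring
    have hν1 : ν p1 = c1 := by
      show (if p1 = p1 then c1 else 0) + (if p1 = p2 then c2 else 0)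
        + (if p1 = p3 then c3 else 0) + (if p1 = p4 then c4 else 0) = c1
      simp [hd12, hd13, hd14]
    have hν2 : ν p2 = c2 := by
      show (if p2 = p1 then c1 else 0) + (if p2 = p2 then c2 else 0)
        + (if p2 = p3 then c3 else 0) + (if p2 = p4 then c4 else 0) = c2
      simp [hd12.symm, hd23, hd24]
    have hν3 : ν p3 = c3 := by
      show (if p3 = p1 then c1 else 0) + (if p3 = p2 then c2 else 0)
        + (if p3 = p3 then c3 else 0) + (if p3 = p4 then c4 else 0) = c3
      simp [hd13.symm, hd23.symm, hd34]
    have hν4 : ν p4 = c4 := by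
      show (if p4 = p1 then c1 else 0) + (if p4 = p2 then c2 else 0)
        + (if p4 = p3 then c3 else 0) + (if p4 = p4 then c4 else 0) = c4
      simp [hd14.symm, hd24.symm, hd34.symm]
    have hwp : ∀ q, w q = L q + ε * ν q := fun q => rfl
    have hL0 : ∑ q ∈ G, |L q| = ∑ i, |lam i| := lam0_abs_sum hinj hmem
    rw [split, hrest, hfour, hL0, hwp, hwp, hwp, hwp, hν1, hν2, hν3, hν4]
    have : |L p1 + ε * c1| + |L p2 + ε * c2| + |L p3 + ε * c3| + |L p4 + ε * c4|
        ≤ |L p1| + |L p2| + |L p3| + |L p4| := hnorm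
    linarith
  -- conclude
  have hden : 0 < ∑ i, |lam i| := by
    rcases (Finset.sum_nonneg (fun i (_ : i ∈ Finset.univ) => abs_nonneg (lam i))).eq_or_lt with h | h
    · exfalso
      rw [pcvRatio, ← h, div_zero] at hM
      exact lt_irrefl 0 hM
    · exact h
  have hMeq : pcvRatio m x lam f * (∑ i, |lam i|)
      = ∑ i, lam i * f (x i).1 (x i).2.1 (x i).2.2 := by
    rw [pcvRatio, div_mul_cancel₀ _ hden.ne']
  have hfinal : ∑ q ∈ G, w q * f q.1 q.2.1 q.2.2
      ≤ ∑ i, lam i * f (x i).1 (x i).2.1 (x i).2.2 := by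
    calc ∑ q ∈ G, w q * f q.1 q.2.1 q.2.2
        ≤ pcvRatio m x lam f * ∑ q ∈ G, |w q| := hmaster
      _ ≤ pcvRatio m x lam f * ∑ i, |lam i| := by
          exact mul_le_mul_of_nonneg_left habs hM.le
      _ = _ := hMeq
  rw [hwf] at hfinal
  nlinarith

lemma norm_helperA (A B C D ε : ℝ) (hε : 0 < ε) (hA : ε ≤ A) (hB : ε ≤ B) :
    |A + ε * (-1)| + |B + ε * (-1)| + |C + ε * 1| + |D + ε * 1|
      ≤ |A| + |B| + |C| + |D| := by
  have h1 : |C + ε * 1| ≤ |C| + ε := by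
    calc |C + ε * 1| ≤ |C| + |ε * 1| := abs_add_le _ _
    _ = |C| + ε := by rw [abs_of_pos (by linarith : (0:ℝ) < ε * 1)]; ring
  have h2 : |D + ε * 1| ≤ |D| + ε := by
    calc |D + ε * 1| ≤ |D| + |ε * 1| := abs_add_le _ _
    _ = |D| + ε := by rw [abs_of_pos (by linarith : (0:ℝ) < ε * 1)]; ring
  have h3 : |A + ε * (-1)| = A - ε := by rw [abs_of_nonneg (by linarith)]; ring
  have h4 : |B + ε * (-1)| = B - ε := by rw [abs_of_nonneg (by linarith)]; ring
  have h5 : |A| = A := abs_of_nonneg (by linarith)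
  have h6 : |B| = B := abs_of_nonneg (by linarith)
  linarith

lemma norm_helperB (A B ε : ℝ) (hε : 0 < ε) (hA : ε ≤ A) (hB : ε ≤ -B) :
    |A + ε * (-1)| + |B + ε * 1| + |(0:ℝ) + ε * 1| + |(0:ℝ) + ε * (-1)|
      ≤ |A| + |B| + |(0:ℝ)| + |(0:ℝ)| := by
  have h3 : |A + ε * (-1)| = A - ε := by rw [abs_of_nonneg (by linarith)]; ring
  have h4 : |B + ε * 1| = -B - ε := by rw [abs_of_nonpos (by linarith)]; ring
  have h5 : |A| = A := abs_of_nonneg (by linarith)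
  have h6 : |B| = -B := abs_of_nonpos (by linarith)
  have h7 : |(0:ℝ) + ε * 1| = ε := by rw [abs_of_pos (by linarith)]; ring
  have h8 : |(0:ℝ) + ε * (-1)| = ε := by
    rw [abs_of_nonpos (by linarith)]; ring
  have h9 : |(0:ℝ)| = 0 := abs_zero
  linarith

lemma key (f : ℝ → ℝ → ℝ → ℝ) (hf : StrictMixed f)
    (Sx Sy Sz : Finset ℝ)
    (hSx : (Sx : Set ℝ) ⊆ Set.Icc (0:ℝ) 1) (hSy : (Sy : Set ℝ) ⊆ Set.Icc (0:ℝ) 1)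
    (hSz : (Sz : Set ℝ) ⊆ Set.Icc (0:ℝ) 1)
    (h01 : ({0, 1} : Finset ℝ) ⊆ Sx ∩ Sy ∩ Sz)
    (m : ℕ) (x : Fin m → ℝ × ℝ × ℝ) (lam : Fin m → ℝ)
    (hopt : OptimalPCV Sx Sy Sz f m x lam) :
    ∃ i : Fin m, x i = ((0:ℝ), (0:ℝ), (0:ℝ)) ∧ 0 < lam i := by
  classical
  have hM := Mpos f hf Sx Sy Sz h01 m x lam hopt
  have hinj : Function.Injective x := hopt.1.1
  have hlamne : ∀ i, lam i ≠ 0 := hopt.1.2.1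
  have hsx := hopt.1.2.2.1
  have hsy := hopt.1.2.2.2.1
  have hsz := hopt.1.2.2.2.2
  have hpts := hopt.2.1
  have hIx : ∀ i, (x i).1 ∈ Set.Icc (0:ℝ) 1 := fun i => hSx (Finset.mem_coe.2 (hpts i).1)
  have hIy : ∀ i, (x i).2.1 ∈ Set.Icc (0:ℝ) 1 := fun i => hSy (Finset.mem_coe.2 (hpts i).2.1)
  have hIz : ∀ i, (x i).2.2 ∈ Set.Icc (0:ℝ) 1 := fun i => hSz (Finset.mem_coe.2 (hpts i).2.2)
  have h0m : (0:ℝ) ∈ Sx ∩ Sy ∩ Sz := h01 (by simp)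
  simp only [Finset.mem_inter] at h0m
  have h0I : (0:ℝ) ∈ Set.Icc (0:ℝ) 1 := by norm_num
  -- plane lemmas
  have plane_pos : ∀ (g : Fin m → ℝ), (∀ ξ : ℝ, ∑ i, (if g i = ξ then lam i else 0) = 0) →
      ∀ j : Fin m, ∃ k, g k = g j ∧ 0 < lam k := by
    intro g hg j
    by_contra hcon
    push_neg at hcon
    have hneg : ∀ k, g k = g j → lam k < 0 := by
      intro k hk
      rcases (hlamne k).lt_or_gt with h | h
      · exact h
      · exact absurd h (not_lt.2 (hcon k hk))
    have hlt : ∑ i, (if g i = g j then lam i else 0) < ∑ _i : Fin m, (0:ℝ) := by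
      refine Finset.sum_lt_sum (fun i _ => ?_) ⟨j, Finset.mem_univ j, ?_⟩
      · split_ifs with h
        exacts [(hneg i h).le, le_rfl]
      · simp [hneg j rfl]
    rw [hg (g j), Finset.sum_const_zero] at hlt
    exact lt_irrefl 0 hlt
  have plane_neg : ∀ (g : Fin m → ℝ), (∀ ξ : ℝ, ∑ i, (if g i = ξ then lam i else 0) = 0) →
      ∀ j : Fin m, ∃ k, g k = g j ∧ lam k < 0 := by
    intro g hg j
    by_contra hcon
    push_neg at hcon
    have hpos' : ∀ k, g k = g j → 0 < lam k := by
      intro k hk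
      rcases (hlamne k).lt_or_gt with h | h
      · exact absurd (hcon k hk) (not_le.2 h)
      · exact h
    have hlt : ∑ _i : Fin m, (0:ℝ) < ∑ i, (if g i = g j then lam i else 0) := by
      refine Finset.sum_lt_sum (fun i _ => ?_) ⟨j, Finset.mem_univ j, ?_⟩
      · split_ifs with h
        exacts [(hpos' i h).le, le_rfl]
      · simp [hpos' j rfl]
    rw [hg (g j), Finset.sum_const_zero] at hlt
    exact lt_irrefl 0 hlt
  -- swap lemmas
  have swapY : ∀ i j : Fin m, 0 < lam i → 0 < lam j →
      (x j).2.1 < (x i).2.1 → (x i).1 ≤ (x j).1 → (x i).2.2 ≤ (x j).2.2 →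
      ((x i).1 < (x j).1 ∨ (x i).2.2 < (x j).2.2) → False := by
    intro i j hi hj hv hu hw hst
    refine pert f Sx Sy Sz m x lam hopt hM (x i) (x j)
      ((x i).1, (x j).2.1, (x i).2.2) ((x j).1, (x i).2.1, (x j).2.2)
      ?_ ?_ ?_ ?_ ?_ ?_ ?_ ?_ ?_ ?_ (-1) (-1) 1 1 ?_ ?_ ?_
      (min (lam i) (lam j)) (lt_min hi hj) ?_ ?_
    · simp only [Finset.mem_product]; exact ⟨(hpts i).1, (hpts i).2.1, (hpts i).2.2⟩
    · simp only [Finset.mem_product]; exact ⟨(hpts j).1, (hpts j).2.1, (hpts j).2.2⟩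
    · simp only [Finset.mem_product]; exact ⟨(hpts i).1, (hpts j).2.1, (hpts i).2.2⟩
    · simp only [Finset.mem_product]; exact ⟨(hpts j).1, (hpts i).2.1, (hpts j).2.2⟩
    · intro h; rw [h] at hv; exact lt_irrefl _ hv
    · intro h
      have h2 := congrArg (fun p => p.2.1) h
      simp only at h2
      exact absurd h2 (ne_of_gt hv)
    · intro h
      have h1 := congrArg (fun p => p.1) h
      have h2 := congrArg (fun p => p.2.2) h
      simp only at h1 h2
      rcases hst with h' | h'
      · exact absurd h1 (ne_of_lt h')
      · exact absurd h2 (ne_of_lt h')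
    · intro h
      have h1 := congrArg (fun p => p.1) h
      have h2 := congrArg (fun p => p.2.2) h
      simp only at h1 h2
      rcases hst with h' | h'
      · exact absurd h1.symm (ne_of_lt h')
      · exact absurd h2.symm (ne_of_lt h')
    · intro h
      have h2 := congrArg (fun p => p.2.1) h
      simp only at h2
      exact absurd h2 (ne_of_lt hv)
    · intro h
      have h1 := congrArg (fun p => p.1) h
      have h2 := congrArg (fun p => p.2.2) h
      simp only at h1 h2
      rcases hst with h' | h'
      · exact absurd h1 (ne_of_lt h')
      · exact absurd h2 (ne_of_lt h')
    · intro ξ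
      by_cases h1 : (x i).1 = ξ <;> by_cases h2 : (x j).1 = ξ <;> norm_num [h1, h2]
    · intro ξ
      by_cases h1 : (x i).2.1 = ξ <;> by_cases h2 : (x j).2.1 = ξ <;> norm_num [h1, h2]
    · intro ξ
      by_cases h1 : (x i).2.2 = ξ <;> by_cases h2 : (x j).2.2 = ξ <;> norm_num [h1, h2]
    · rw [lam0_apply hinj i, lam0_apply hinj j]
      exact norm_helperA (lam i) (lam j) _ _ _ (lt_min hi hj) (min_le_left _ _)
        (min_le_right _ _)
    · show 0 < -1 * f (x i).1 (x i).2.1 (x i).2.2 + -1 * f (x j).1 (x j).2.1 (x j).2.2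
        + 1 * f (x i).1 (x j).2.1 (x i).2.2 + 1 * f (x j).1 (x i).2.1 (x j).2.2
      have h1 : (x i).1 < (x j).1 → 0 < f (x j).1 (x i).2.1 (x j).2.2
          - f (x j).1 (x j).2.1 (x j).2.2 - f (x i).1 (x i).2.1 (x j).2.2
          + f (x i).1 (x j).2.1 (x j).2.2 :=
        fun h => hf.1 (x i).1 (x j).1 (x j).2.1 (x i).2.1 (x j).2.2
          (hIx i) (hIx j) (hIy j) (hIy i) (hIz j) h hv
      have h2 : (x i).2.2 < (x j).2.2 → 0 < f (x i).1 (x i).2.1 (x j).2.2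
          - f (x i).1 (x i).2.1 (x i).2.2 - f (x i).1 (x j).2.1 (x j).2.2
          + f (x i).1 (x j).2.1 (x i).2.2 := by
        intro h
        have := hf.2.2 (x j).2.1 (x i).2.1 (x i).2.2 (x j).2.2 (x i).1
          (hIy j) (hIy i) (hIz i) (hIz j) (hIx i) hv h
        linarith
      rcases hu.lt_or_eq with hlt1 | heq1
      · rcases hw.lt_or_eq with hlt2 | heq2
        · have := h1 hlt1; have := h2 hlt2; linarith
        · rw [heq2]; have := h1 hlt1; linarith
      · rcases hw.lt_or_eq with hlt2 | heq2
        · have := h2 hlt2; rw [heq1] at this ⊢; linarith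
        · rcases hst with h' | h'
          · exact absurd heq1 (ne_of_lt h')
          · exact absurd heq2 (ne_of_lt h')
  have swapX : ∀ i j : Fin m, 0 < lam i → 0 < lam j →
      (x j).1 < (x i).1 → (x i).2.1 ≤ (x j).2.1 → (x i).2.2 ≤ (x j).2.2 →
      ((x i).2.1 < (x j).2.1 ∨ (x i).2.2 < (x j).2.2) → False := by
    intro i j hi hj hu hv hw hst
    refine pert f Sx Sy Sz m x lam hopt hM (x i) (x j)
      ((x j).1, (x i).2.1, (x i).2.2) ((x i).1, (x j).2.1, (x j).2.2)
      ?_ ?_ ?_ ?_ ?_ ?_ ?_ ?_ ?_ ?_ (-1) (-1) 1 1 ?_ ?_ ?_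
      (min (lam i) (lam j)) (lt_min hi hj) ?_ ?_
    · simp only [Finset.mem_product]; exact ⟨(hpts i).1, (hpts i).2.1, (hpts i).2.2⟩
    · simp only [Finset.mem_product]; exact ⟨(hpts j).1, (hpts j).2.1, (hpts j).2.2⟩
    · simp only [Finset.mem_product]; exact ⟨(hpts j).1, (hpts i).2.1, (hpts i).2.2⟩
    · simp only [Finset.mem_product]; exact ⟨(hpts i).1, (hpts j).2.1, (hpts j).2.2⟩
    · intro h; rw [h] at hu; exact lt_irrefl _ hu
    · intro h
      have h1 := congrArg (fun p => p.1) h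
      simp only at h1
      exact absurd h1 (ne_of_gt hu)
    · intro h
      have h1 := congrArg (fun p => p.2.1) h
      have h2 := congrArg (fun p => p.2.2) h
      simp only at h1 h2
      rcases hst with h' | h'
      · exact absurd h1 (ne_of_lt h')
      · exact absurd h2 (ne_of_lt h')
    · intro h
      have h1 := congrArg (fun p => p.2.1) h
      have h2 := congrArg (fun p => p.2.2) h
      simp only at h1 h2
      rcases hst with h' | h'
      · exact absurd h1.symm (ne_of_lt h')
      · exact absurd h2.symm (ne_of_lt h')
    · intro h
      have h1 := congrArg (fun p => p.1) h
      simp only at h1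
      exact absurd h1 (ne_of_lt hu)
    · intro h
      have h1 := congrArg (fun p => p.1) h
      simp only at h1
      exact absurd h1.symm (ne_of_gt hu)
    · intro ξ
      by_cases h1 : (x i).1 = ξ <;> by_cases h2 : (x j).1 = ξ <;> norm_num [h1, h2]
    · intro ξ
      by_cases h1 : (x i).2.1 = ξ <;> by_cases h2 : (x j).2.1 = ξ <;> norm_num [h1, h2]
    · intro ξ
      by_cases h1 : (x i).2.2 = ξ <;> by_cases h2 : (x j).2.2 = ξ <;> norm_num [h1, h2]
    · rw [lam0_apply hinj i, lam0_apply hinj j]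
      exact norm_helperA (lam i) (lam j) _ _ _ (lt_min hi hj) (min_le_left _ _)
        (min_le_right _ _)
    · show 0 < -1 * f (x i).1 (x i).2.1 (x i).2.2 + -1 * f (x j).1 (x j).2.1 (x j).2.2
        + 1 * f (x j).1 (x i).2.1 (x i).2.2 + 1 * f (x i).1 (x j).2.1 (x j).2.2
      have h1 : (x i).2.1 < (x j).2.1 → 0 < f (x i).1 (x j).2.1 (x j).2.2
          - f (x i).1 (x i).2.1 (x j).2.2 - f (x j).1 (x j).2.1 (x j).2.2
          + f (x j).1 (x i).2.1 (x j).2.2 :=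
        fun h => hf.1 (x j).1 (x i).1 (x i).2.1 (x j).2.1 (x j).2.2
          (hIx j) (hIx i) (hIy i) (hIy j) (hIz j) hu h
      have h2 : (x i).2.2 < (x j).2.2 → 0 < f (x i).1 (x i).2.1 (x j).2.2
          - f (x i).1 (x i).2.1 (x i).2.2 - f (x j).1 (x i).2.1 (x j).2.2
          + f (x j).1 (x i).2.1 (x i).2.2 :=
        fun h => hf.2.1 (x j).1 (x i).1 (x i).2.2 (x j).2.2 (x i).2.1
          (hIx j) (hIx i) (hIz i) (hIz j) (hIy i) hu h
      rcases hv.lt_or_eq with hlt1 | heq1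
      · rcases hw.lt_or_eq with hlt2 | heq2
        · have := h1 hlt1; have := h2 hlt2; linarith
        · rw [heq2]; have := h1 hlt1; linarith
      · rcases hw.lt_or_eq with hlt2 | heq2
        · have := h2 hlt2; rw [heq1] at this ⊢; linarith
        · rcases hst with h' | h'
          · exact absurd heq1 (ne_of_lt h')
          · exact absurd heq2 (ne_of_lt h')
  have swapZ : ∀ i j : Fin m, 0 < lam i → 0 < lam j →
      (x j).2.2 < (x i).2.2 → (x i).1 ≤ (x j).1 → (x i).2.1 ≤ (x j).2.1 →
      ((x i).1 < (x j).1 ∨ (x i).2.1 < (x j).2.1) → False := by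
    intro i j hi hj hw hu hv hst
    refine pert f Sx Sy Sz m x lam hopt hM (x i) (x j)
      ((x i).1, (x i).2.1, (x j).2.2) ((x j).1, (x j).2.1, (x i).2.2)
      ?_ ?_ ?_ ?_ ?_ ?_ ?_ ?_ ?_ ?_ (-1) (-1) 1 1 ?_ ?_ ?_
      (min (lam i) (lam j)) (lt_min hi hj) ?_ ?_
    · simp only [Finset.mem_product]; exact ⟨(hpts i).1, (hpts i).2.1, (hpts i).2.2⟩
    · simp only [Finset.mem_product]; exact ⟨(hpts j).1, (hpts j).2.1, (hpts j).2.2⟩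
    · simp only [Finset.mem_product]; exact ⟨(hpts i).1, (hpts i).2.1, (hpts j).2.2⟩
    · simp only [Finset.mem_product]; exact ⟨(hpts j).1, (hpts j).2.1, (hpts i).2.2⟩
    · intro h; rw [h] at hw; exact lt_irrefl _ hw
    · intro h
      have h1 := congrArg (fun p => p.2.2) h
      simp only at h1
      exact absurd h1 (ne_of_gt hw)
    · intro h
      have h1 := congrArg (fun p => p.1) h
      have h2 := congrArg (fun p => p.2.1) h
      simp only at h1 h2
      rcases hst with h' | h'
      · exact absurd h1 (ne_of_lt h')
      · exact absurd h2 (ne_of_lt h')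
    · intro h
      have h1 := congrArg (fun p => p.1) h
      have h2 := congrArg (fun p => p.2.1) h
      simp only at h1 h2
      rcases hst with h' | h'
      · exact absurd h1.symm (ne_of_lt h')
      · exact absurd h2.symm (ne_of_lt h')
    · intro h
      have h1 := congrArg (fun p => p.2.2) h
      simp only at h1
      exact absurd h1 (ne_of_lt hw)
    · intro h
      have h1 := congrArg (fun p => p.1) h
      have h2 := congrArg (fun p => p.2.1) h
      simp only at h1 h2
      rcases hst with h' | h'
      · exact absurd h1 (ne_of_lt h')
      · exact absurd h2 (ne_of_lt h')
    · intro ξ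
      by_cases h1 : (x i).1 = ξ <;> by_cases h2 : (x j).1 = ξ <;> norm_num [h1, h2]
    · intro ξ
      by_cases h1 : (x i).2.1 = ξ <;> by_cases h2 : (x j).2.1 = ξ <;> norm_num [h1, h2]
    · intro ξ
      by_cases h1 : (x i).2.2 = ξ <;> by_cases h2 : (x j).2.2 = ξ <;> norm_num [h1, h2]
    · rw [lam0_apply hinj i, lam0_apply hinj j]
      exact norm_helperA (lam i) (lam j) _ _ _ (lt_min hi hj) (min_le_left _ _)
        (min_le_right _ _)
    · show 0 < -1 * f (x i).1 (x i).2.1 (x i).2.2 + -1 * f (x j).1 (x j).2.1 (x j).2.2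
        + 1 * f (x i).1 (x i).2.1 (x j).2.2 + 1 * f (x j).1 (x j).2.1 (x i).2.2
      have h1 : (x i).2.1 < (x j).2.1 → 0 < f (x j).1 (x j).2.1 (x i).2.2
          - f (x j).1 (x j).2.1 (x j).2.2 - f (x j).1 (x i).2.1 (x i).2.2
          + f (x j).1 (x i).2.1 (x j).2.2 :=
        fun h => hf.2.2 (x i).2.1 (x j).2.1 (x j).2.2 (x i).2.2 (x j).1
          (hIy i) (hIy j) (hIz j) (hIz i) (hIx j) h hw
      have h2 : (x i).1 < (x j).1 → 0 < f (x j).1 (x i).2.1 (x i).2.2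
          - f (x j).1 (x i).2.1 (x j).2.2 - f (x i).1 (x i).2.1 (x i).2.2
          + f (x i).1 (x i).2.1 (x j).2.2 :=
        fun h => hf.2.1 (x i).1 (x j).1 (x j).2.2 (x i).2.2 (x i).2.1
          (hIx i) (hIx j) (hIz j) (hIz i) (hIy i) h hw
      rcases hu.lt_or_eq with hlt1 | heq1
      · rcases hv.lt_or_eq with hlt2 | heq2
        · have := h1 hlt2; have := h2 hlt1; linarith
        · have := h2 hlt1; rw [heq2] at this ⊢; linarith
      · rcases hv.lt_or_eq with hlt2 | heq2
        · have := h1 hlt2; rw [heq1]; linarith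
        · rcases hst with h' | h'
          · exact absurd heq1 (ne_of_lt h')
          · exact absurd heq2 (ne_of_lt h')
  -- chain structure of positive points
  have chain_aux : ∀ i j : Fin m, 0 < lam i → 0 < lam j → (x i).1 ≤ (x j).1 →
      (((x i).1 ≤ (x j).1 ∧ (x i).2.1 ≤ (x j).2.1 ∧ (x i).2.2 ≤ (x j).2.2) ∨
        ((x j).1 ≤ (x i).1 ∧ (x j).2.1 ≤ (x i).2.1 ∧ (x j).2.2 ≤ (x i).2.2)) := by
    intro i j hi hj hx1
    rcases le_or_gt (x i).2.1 (x j).2.1 with hb | hb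
    · rcases le_or_gt (x i).2.2 (x j).2.2 with hc | hc
      · exact Or.inl ⟨hx1, hb, hc⟩
      · rcases hx1.lt_or_eq with h | h
        · exact (swapZ i j hi hj hc hx1 hb (Or.inl h)).elim
        · rcases hb.lt_or_eq with h' | h'
          · exact (swapZ i j hi hj hc hx1 hb (Or.inr h')).elim
          · exact Or.inr ⟨h.ge, h'.ge, hc.le⟩
    · rcases le_or_gt (x i).2.2 (x j).2.2 with hc | hc
      · rcases hx1.lt_or_eq with h | h
        · exact (swapY i j hi hj hb hx1 hc (Or.inl h)).elim
        · rcases hc.lt_or_eq with h' | h'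
          · exact (swapY i j hi hj hb hx1 hc (Or.inr h')).elim
          · exact Or.inr ⟨h.ge, hb.le, h'.ge⟩
      · rcases hx1.lt_or_eq with h | h
        · exact (swapX j i hj hi h hb.le hc.le (Or.inl hb)).elim
        · exact Or.inr ⟨h.ge, hb.le, hc.le⟩
  have chain : ∀ i j : Fin m, 0 < lam i → 0 < lam j →
      (((x i).1 ≤ (x j).1 ∧ (x i).2.1 ≤ (x j).2.1 ∧ (x i).2.2 ≤ (x j).2.2) ∨
        ((x j).1 ≤ (x i).1 ∧ (x j).2.1 ≤ (x i).2.1 ∧ (x j).2.2 ≤ (x i).2.2)) := by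
    intro i j hi hj
    rcases le_total (x i).1 (x j).1 with h | h
    · exact chain_aux i j hi hj h
    · exact (chain_aux j i hj hi h).symm
  -- there is a positive point
  have hden : 0 < ∑ i, |lam i| := by
    rcases (Finset.sum_nonneg (fun i (_ : i ∈ Finset.univ) => abs_nonneg (lam i))).eq_or_lt
      with h | h
    · exfalso
      rw [pcvRatio, ← h, div_zero] at hM
      exact lt_irrefl 0 hM
    · exact h
  obtain ⟨i1, _, hi1⟩ := Finset.exists_ne_zero_of_sum_ne_zero hden.ne'
  obtain ⟨k0, _, hk0⟩ := plane_pos (fun t => (x t).1) hsx i1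
  set A : Finset (Fin m) := Finset.univ.filter (fun i => 0 < lam i) with hA
  have hAne : A.Nonempty := ⟨k0, Finset.mem_filter.2 ⟨Finset.mem_univ _, hk0⟩⟩
  obtain ⟨i0, hi0A, hmin⟩ := Finset.exists_min_image A
    (fun i => (x i).1 + (x i).2.1 + (x i).2.2) hAne
  have hi0 : 0 < lam i0 := (Finset.mem_filter.1 hi0A).2
  have hmin3 : ∀ j : Fin m, 0 < lam j →
      (x i0).1 ≤ (x j).1 ∧ (x i0).2.1 ≤ (x j).2.1 ∧ (x i0).2.2 ≤ (x j).2.2 := by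
    intro j hj
    rcases chain i0 j hi0 hj with h | h
    · exact h
    · have hs := hmin j (Finset.mem_filter.2 ⟨Finset.mem_univ _, hj⟩)
      exact ⟨by linarith [h.1, h.2.1, h.2.2], by linarith [h.1, h.2.1, h.2.2],
        by linarith [h.1, h.2.1, h.2.2]⟩
  have hdom : ∀ j : Fin m,
      (x i0).1 ≤ (x j).1 ∧ (x i0).2.1 ≤ (x j).2.1 ∧ (x i0).2.2 ≤ (x j).2.2 := by
    intro j
    refine ⟨?_, ?_, ?_⟩
    · obtain ⟨k, hk, hkpos⟩ := plane_pos (fun t => (x t).1) hsx j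
      rw [← hk]
      exact (hmin3 k hkpos).1
    · obtain ⟨k, hk, hkpos⟩ := plane_pos (fun t => (x t).2.1) hsy j
      rw [← hk]
      exact (hmin3 k hkpos).2.1
    · obtain ⟨k, hk, hkpos⟩ := plane_pos (fun t => (x t).2.2) hsz j
      rw [← hk]
      exact (hmin3 k hkpos).2.2
  
  by_cases ha : (x i0).1 = 0
  · by_cases hb : (x i0).2.1 = 0
    · by_cases hc : (x i0).2.2 = 0
      · refine ⟨i0, ?_, hi0⟩
        have h : x i0 = ((x i0).1, (x i0).2.1, (x i0).2.2) := rfl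
        rw [ha, hb, hc] at h
        exact h
      · -- z-block
        exfalso
        have hc' : 0 < (x i0).2.2 := lt_of_le_of_ne (hIz i0).1 (Ne.symm hc)
        obtain ⟨k, hk, hkneg⟩ := plane_neg (fun t => (x t).2.2) hsz i0
        try simp only at hk
        have hik : i0 ≠ k := by intro h; rw [← h] at hkneg; linarith
        have hku : (x i0).1 ≤ (x k).1 := (hdom k).1
        have hkv : (x i0).2.1 ≤ (x k).2.1 := (hdom k).2.1
        have hstv : (x i0).1 < (x k).1 ∨ (x i0).2.1 < (x k).2.1 := by
          by_contra hcon
          push_neg at hcon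
          have e : x i0 = x k := by
            have h : x i0 = ((x i0).1, (x i0).2.1, (x i0).2.2) := rfl
            rw [h, le_antisymm hku hcon.1, le_antisymm hkv hcon.2, ← hk]
          exact hik (hinj e)
        have hne3 : ∀ i, x i ≠ ((x i0).1, (x i0).2.1, (0:ℝ)) := by
          intro i h
          have h1 := congrArg (fun p => p.2.2) h
          simp only at h1
          have := (hdom i).2.2
          rw [h1] at this
          linarith
        have hne4 : ∀ i, x i ≠ ((x k).1, (x k).2.1, (0:ℝ)) := by
          intro i h
          have h1 := congrArg (fun p => p.2.2) h
          simp only at h1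
          have := (hdom i).2.2
          rw [h1] at this
          linarith
        refine pert f Sx Sy Sz m x lam hopt hM (x i0) (x k)
          ((x i0).1, (x i0).2.1, (0:ℝ)) ((x k).1, (x k).2.1, (0:ℝ))
          ?_ ?_ ?_ ?_ ?_ ?_ ?_ ?_ ?_ ?_ (-1) 1 1 (-1) ?_ ?_ ?_
          (min (lam i0) (-lam k)) (lt_min hi0 (by linarith)) ?_ ?_
        · simp only [Finset.mem_product]
          exact ⟨(hpts i0).1, (hpts i0).2.1, (hpts i0).2.2⟩
        · simp only [Finset.mem_product]
          exact ⟨(hpts k).1, (hpts k).2.1, (hpts k).2.2⟩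
        · simp only [Finset.mem_product]
          exact ⟨(hpts i0).1, (hpts i0).2.1, h0m.2⟩
        · simp only [Finset.mem_product]
          exact ⟨(hpts k).1, (hpts k).2.1, h0m.2⟩
        · intro h; exact hik (hinj h)
        · exact hne3 i0
        · exact hne4 i0
        · exact hne3 k
        · exact hne4 k
        · intro h
          have h1 := congrArg (fun p => p.1) h
          have h2 := congrArg (fun p => p.2.1) h
          simp only at h1 h2
          rcases hstv with h' | h'
          · exact absurd h1 (ne_of_lt h')
          · exact absurd h2 (ne_of_lt h')
        · intro ξ
          by_cases h1 : (x i0).1 = ξ <;> by_cases h2 : (x k).1 = ξ <;>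
            norm_num [h1, h2]
        · intro ξ
          by_cases h1 : (x i0).2.1 = ξ <;> by_cases h2 : (x k).2.1 = ξ <;>
            norm_num [h1, h2]
        · intro ξ
          rcases eq_or_ne (0:ℝ) ξ with h2 | h2
          · subst h2
            by_cases h1 : (x i0).2.2 = 0 <;> norm_num [h1, hk]
          · by_cases h1 : (x i0).2.2 = ξ <;> norm_num [h1, h2, hk]
        · rw [lam0_apply hinj i0, lam0_apply hinj k, lam0_not_mem hne3,
            lam0_not_mem hne4]
          exact norm_helperB (lam i0) (lam k) _ (lt_min hi0 (by linarith))
            (min_le_left _ _) (min_le_right _ _)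
        · show 0 < -1 * f (x i0).1 (x i0).2.1 (x i0).2.2
            + 1 * f (x k).1 (x k).2.1 (x k).2.2
            + 1 * f (x i0).1 (x i0).2.1 0 + -1 * f (x k).1 (x k).2.1 0
          rw [hk]
          have h1 : (x i0).1 < (x k).1 → 0 < f (x k).1 (x k).2.1 (x i0).2.2
              - f (x k).1 (x k).2.1 0 - f (x i0).1 (x k).2.1 (x i0).2.2
              + f (x i0).1 (x k).2.1 0 :=
            fun h => hf.2.1 (x i0).1 (x k).1 0 (x i0).2.2 (x k).2.1
              (hIx i0) (hIx k) h0I (hIz i0) (hIy k) h hc'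
          have h2 : (x i0).2.1 < (x k).2.1 → 0 < f (x i0).1 (x k).2.1 (x i0).2.2
              - f (x i0).1 (x k).2.1 0 - f (x i0).1 (x i0).2.1 (x i0).2.2
              + f (x i0).1 (x i0).2.1 0 :=
            fun h => hf.2.2 (x i0).2.1 (x k).2.1 0 (x i0).2.2 (x i0).1
              (hIy i0) (hIy k) h0I (hIz i0) (hIx i0) h hc'
          rcases hku.lt_or_eq with hlt1 | heq1
          · rcases hkv.lt_or_eq with hlt2 | heq2
            · have := h1 hlt1; have := h2 hlt2; linarith
            · have := h1 hlt1; rw [← heq2] at this ⊢; linarith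
          · rcases hkv.lt_or_eq with hlt2 | heq2
            · have := h2 hlt2; rw [← heq1]; linarith
            · rcases hstv with h' | h'
              · exact absurd heq1 (ne_of_lt h')
              · exact absurd heq2 (ne_of_lt h')
    · -- y-block
      exfalso
      have hb' : 0 < (x i0).2.1 := lt_of_le_of_ne (hIy i0).1 (Ne.symm hb)
      obtain ⟨k, hk, hkneg⟩ := plane_neg (fun t => (x t).2.1) hsy i0
      try simp only at hk
      have hik : i0 ≠ k := by intro h; rw [← h] at hkneg; linarith
      have hku : (x i0).1 ≤ (x k).1 := (hdom k).1
      have hkw : (x i0).2.2 ≤ (x k).2.2 := (hdom k).2.2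
      have hstv : (x i0).1 < (x k).1 ∨ (x i0).2.2 < (x k).2.2 := by
        by_contra hcon
        push_neg at hcon
        have e : x i0 = x k := by
          have h : x i0 = ((x i0).1, (x i0).2.1, (x i0).2.2) := rfl
          rw [h, le_antisymm hku hcon.1, le_antisymm hkw hcon.2, ← hk]
        exact hik (hinj e)
      have hne3 : ∀ i, x i ≠ ((x i0).1, (0:ℝ), (x i0).2.2) := by
        intro i h
        have h1 := congrArg (fun p => p.2.1) h
        simp only at h1
        have := (hdom i).2.1
        rw [h1] at this
        linarith
      have hne4 : ∀ i, x i ≠ ((x k).1, (0:ℝ), (x k).2.2) := by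
        intro i h
        have h1 := congrArg (fun p => p.2.1) h
        simp only at h1
        have := (hdom i).2.1
        rw [h1] at this
        linarith
      refine pert f Sx Sy Sz m x lam hopt hM (x i0) (x k)
        ((x i0).1, (0:ℝ), (x i0).2.2) ((x k).1, (0:ℝ), (x k).2.2)
        ?_ ?_ ?_ ?_ ?_ ?_ ?_ ?_ ?_ ?_ (-1) 1 1 (-1) ?_ ?_ ?_
        (min (lam i0) (-lam k)) (lt_min hi0 (by linarith)) ?_ ?_
      · simp only [Finset.mem_product]
        exact ⟨(hpts i0).1, (hpts i0).2.1, (hpts i0).2.2⟩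
      · simp only [Finset.mem_product]
        exact ⟨(hpts k).1, (hpts k).2.1, (hpts k).2.2⟩
      · simp only [Finset.mem_product]
        exact ⟨(hpts i0).1, h0m.1.2, (hpts i0).2.2⟩
      · simp only [Finset.mem_product]
        exact ⟨(hpts k).1, h0m.1.2, (hpts k).2.2⟩
      · intro h; exact hik (hinj h)
      · exact hne3 i0
      · exact hne4 i0
      · exact hne3 k
      · exact hne4 k
      · intro h
        have h1 := congrArg (fun p => p.1) h
        have h2 := congrArg (fun p => p.2.2) h
        simp only at h1 h2
        rcases hstv with h' | h'
        · exact absurd h1 (ne_of_lt h')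
        · exact absurd h2 (ne_of_lt h')
      · intro ξ
        by_cases h1 : (x i0).1 = ξ <;> by_cases h2 : (x k).1 = ξ <;>
          norm_num [h1, h2]
      · intro ξ
        rcases eq_or_ne (0:ℝ) ξ with h2 | h2
        · subst h2
          by_cases h1 : (x i0).2.1 = 0 <;> norm_num [h1, hk]
        · by_cases h1 : (x i0).2.1 = ξ <;> norm_num [h1, h2, hk]
      · intro ξ
        by_cases h1 : (x i0).2.2 = ξ <;> by_cases h2 : (x k).2.2 = ξ <;>
          norm_num [h1, h2]
      · rw [lam0_apply hinj i0, lam0_apply hinj k, lam0_not_mem hne3,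
          lam0_not_mem hne4]
        exact norm_helperB (lam i0) (lam k) _ (lt_min hi0 (by linarith))
          (min_le_left _ _) (min_le_right _ _)
      · show 0 < -1 * f (x i0).1 (x i0).2.1 (x i0).2.2
          + 1 * f (x k).1 (x k).2.1 (x k).2.2
          + 1 * f (x i0).1 0 (x i0).2.2 + -1 * f (x k).1 0 (x k).2.2
        rw [hk]
        have h1 : (x i0).1 < (x k).1 → 0 < f (x k).1 (x i0).2.1 (x k).2.2
            - f (x k).1 0 (x k).2.2 - f (x i0).1 (x i0).2.1 (x k).2.2
            + f (x i0).1 0 (x k).2.2 :=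
          fun h => hf.1 (x i0).1 (x k).1 0 (x i0).2.1 (x k).2.2
            (hIx i0) (hIx k) h0I (hIy i0) (hIz k) h hb'
        have h2 : (x i0).2.2 < (x k).2.2 → 0 < f (x i0).1 (x i0).2.1 (x k).2.2
            - f (x i0).1 (x i0).2.1 (x i0).2.2 - f (x i0).1 0 (x k).2.2
            + f (x i0).1 0 (x i0).2.2 :=
          fun h => hf.2.2 0 (x i0).2.1 (x i0).2.2 (x k).2.2 (x i0).1
            h0I (hIy i0) (hIz i0) (hIz k) (hIx i0) hb' h
        rcases hku.lt_or_eq with hlt1 | heq1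
        · rcases hkw.lt_or_eq with hlt2 | heq2
          · have := h1 hlt1; have := h2 hlt2; linarith
          · have := h1 hlt1; rw [← heq2] at this ⊢; linarith
        · rcases hkw.lt_or_eq with hlt2 | heq2
          · have := h2 hlt2; rw [← heq1]; linarith
          · rcases hstv with h' | h'
            · exact absurd heq1 (ne_of_lt h')
            · exact absurd heq2 (ne_of_lt h')
  · -- x-block
    exfalso
    have ha' : 0 < (x i0).1 := lt_of_le_of_ne (hIx i0).1 (Ne.symm ha)
    obtain ⟨k, hk, hkneg⟩ := plane_neg (fun t => (x t).1) hsx i0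
    try simp only at hk
    have hik : i0 ≠ k := by intro h; rw [← h] at hkneg; linarith
    have hkv : (x i0).2.1 ≤ (x k).2.1 := (hdom k).2.1
    have hkw : (x i0).2.2 ≤ (x k).2.2 := (hdom k).2.2
    have hstv : (x i0).2.1 < (x k).2.1 ∨ (x i0).2.2 < (x k).2.2 := by
      by_contra hcon
      push_neg at hcon
      have e : x i0 = x k := by
        have h : x i0 = ((x i0).1, (x i0).2.1, (x i0).2.2) := rfl
        rw [h, le_antisymm hkv hcon.1, le_antisymm hkw hcon.2, ← hk]
      exact hik (hinj e)
    have hne3 : ∀ i, x i ≠ ((0:ℝ), (x i0).2.1, (x i0).2.2) := by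
      intro i h
      have h1 := congrArg (fun p => p.1) h
      simp only at h1
      have := (hdom i).1
      rw [h1] at this
      linarith
    have hne4 : ∀ i, x i ≠ ((0:ℝ), (x k).2.1, (x k).2.2) := by
      intro i h
      have h1 := congrArg (fun p => p.1) h
      simp only at h1
      have := (hdom i).1
      rw [h1] at this
      linarith
    refine pert f Sx Sy Sz m x lam hopt hM (x i0) (x k)
      ((0:ℝ), (x i0).2.1, (x i0).2.2) ((0:ℝ), (x k).2.1, (x k).2.2)
      ?_ ?_ ?_ ?_ ?_ ?_ ?_ ?_ ?_ ?_ (-1) 1 1 (-1) ?_ ?_ ?_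
      (min (lam i0) (-lam k)) (lt_min hi0 (by linarith)) ?_ ?_
    · simp only [Finset.mem_product]
      exact ⟨(hpts i0).1, (hpts i0).2.1, (hpts i0).2.2⟩
    · simp only [Finset.mem_product]
      exact ⟨(hpts k).1, (hpts k).2.1, (hpts k).2.2⟩
    · simp only [Finset.mem_product]
      exact ⟨h0m.1.1, (hpts i0).2.1, (hpts i0).2.2⟩
    · simp only [Finset.mem_product]
      exact ⟨h0m.1.1, (hpts k).2.1, (hpts k).2.2⟩
    · intro h; exact hik (hinj h)
    · exact hne3 i0
    · exact hne4 i0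
    · exact hne3 k
    · exact hne4 k
    · intro h
      have h1 := congrArg (fun p => p.2.1) h
      have h2 := congrArg (fun p => p.2.2) h
      simp only at h1 h2
      rcases hstv with h' | h'
      · exact absurd h1 (ne_of_lt h')
      · exact absurd h2 (ne_of_lt h')
    · intro ξ
      rcases eq_or_ne (0:ℝ) ξ with h2 | h2
      · subst h2
        by_cases h1 : (x i0).1 = 0 <;> norm_num [h1, hk]
      · by_cases h1 : (x i0).1 = ξ <;> norm_num [h1, h2, hk]
    · intro ξ
      by_cases h1 : (x i0).2.1 = ξ <;> by_cases h2 : (x k).2.1 = ξ <;>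
        norm_num [h1, h2]
    · intro ξ
      by_cases h1 : (x i0).2.2 = ξ <;> by_cases h2 : (x k).2.2 = ξ <;>
        norm_num [h1, h2]
    · rw [lam0_apply hinj i0, lam0_apply hinj k, lam0_not_mem hne3,
        lam0_not_mem hne4]
      exact norm_helperB (lam i0) (lam k) _ (lt_min hi0 (by linarith))
        (min_le_left _ _) (min_le_right _ _)
    · show 0 < -1 * f (x i0).1 (x i0).2.1 (x i0).2.2
        + 1 * f (x k).1 (x k).2.1 (x k).2.2
        + 1 * f 0 (x i0).2.1 (x i0).2.2 + -1 * f 0 (x k).2.1 (x k).2.2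
      rw [hk]
      have h1 : (x i0).2.1 < (x k).2.1 → 0 < f (x i0).1 (x k).2.1 (x k).2.2
          - f (x i0).1 (x i0).2.1 (x k).2.2 - f 0 (x k).2.1 (x k).2.2
          + f 0 (x i0).2.1 (x k).2.2 :=
        fun h => hf.1 0 (x i0).1 (x i0).2.1 (x k).2.1 (x k).2.2
          h0I (hIx i0) (hIy i0) (hIy k) (hIz k) ha' h
      have h2 : (x i0).2.2 < (x k).2.2 → 0 < f (x i0).1 (x i0).2.1 (x k).2.2
          - f (x i0).1 (x i0).2.1 (x i0).2.2 - f 0 (x i0).2.1 (x k).2.2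
          + f 0 (x i0).2.1 (x i0).2.2 :=
        fun h => hf.2.1 0 (x i0).1 (x i0).2.2 (x k).2.2 (x i0).2.1
          h0I (hIx i0) (hIz i0) (hIz k) (hIy i0) ha' h
      rcases hkv.lt_or_eq with hlt1 | heq1
      · rcases hkw.lt_or_eq with hlt2 | heq2
        · have := h1 hlt1; have := h2 hlt2; linarith
        · have := h1 hlt1; rw [← heq2] at this ⊢; linarith
      · rcases hkw.lt_or_eq with hlt2 | heq2
        · have := h2 hlt2; rw [← heq1]; linarith
        · rcases hstv with h' | h'
          · exact absurd heq1 (ne_of_lt h')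
          · exact absurd heq2 (ne_of_lt h')

/-- Reflection of a point of the cube through its center. -/
def refl3 (p : ℝ × ℝ × ℝ) : ℝ × ℝ × ℝ := (1 - p.1, 1 - p.2.1, 1 - p.2.2)

/-- Reflection of the function. -/
def rf (f : ℝ → ℝ → ℝ → ℝ) : ℝ → ℝ → ℝ → ℝ := fun u v w => f (1-u) (1-v) (1-w)

lemma refl3_inj : Function.Injective refl3 := by
  intro p q h
  have h1 := congrArg (fun p => p.1) h
  have h2 := congrArg (fun p => p.2.1) h
  have h3 := congrArg (fun p => p.2.2) h
  simp only [refl3] at h1 h2 h3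
  have e1 : p.1 = q.1 := by linarith
  have e2 : p.2.1 = q.2.1 := by linarith
  have e3 : p.2.2 = q.2.2 := by linarith
  have hp : p = (p.1, p.2.1, p.2.2) := rfl
  rw [hp, e1, e2, e3]

lemma rf_strict (f : ℝ → ℝ → ℝ → ℝ) (hf : StrictMixed f) : StrictMixed (rf f) := by
  have hIcc : ∀ t : ℝ, t ∈ Set.Icc (0:ℝ) 1 → 1 - t ∈ Set.Icc (0:ℝ) 1 := by
    intro t ht
    exact ⟨by linarith [ht.1, ht.2], by linarith [ht.1, ht.2]⟩
  refine ⟨?_, ?_, ?_⟩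
  · intro a a' b b' c ha ha' hb hb' hc h1 h2
    have := hf.1 (1-a') (1-a) (1-b') (1-b) (1-c) (hIcc _ ha') (hIcc _ ha)
      (hIcc _ hb') (hIcc _ hb) (hIcc _ hc) (by linarith) (by linarith)
    show 0 < f (1-a') (1-b') (1-c) - f (1-a') (1-b) (1-c)
      - f (1-a) (1-b') (1-c) + f (1-a) (1-b) (1-c)
    linarith
  · intro a a' b b' c ha ha' hb hb' hc h1 h2
    have := hf.2.1 (1-a') (1-a) (1-b') (1-b) (1-c) (hIcc _ ha') (hIcc _ ha)
      (hIcc _ hb') (hIcc _ hb) (hIcc _ hc) (by linarith) (by linarith)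
    show 0 < f (1-a') (1-c) (1-b') - f (1-a') (1-c) (1-b)
      - f (1-a) (1-c) (1-b') + f (1-a) (1-c) (1-b)
    linarith
  · intro a a' b b' c ha ha' hb hb' hc h1 h2
    have := hf.2.2 (1-a') (1-a) (1-b') (1-b) (1-c) (hIcc _ ha') (hIcc _ ha)
      (hIcc _ hb') (hIcc _ hb) (hIcc _ hc) (by linarith) (by linarith)
    show 0 < f (1-c) (1-a') (1-b') - f (1-c) (1-a') (1-b)
      - f (1-c) (1-a) (1-b') + f (1-c) (1-a) (1-b)
    linarith

lemma refl3_pcv (m : ℕ) (x : Fin m → ℝ × ℝ × ℝ) (lam : Fin m → ℝ)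
    (h : IsPCV m x lam) : IsPCV m (fun i => refl3 (x i)) lam := by
  obtain ⟨hinj, hne, hx, hy, hz⟩ := h
  refine ⟨fun a b hab => hinj (refl3_inj hab), hne, ?_, ?_, ?_⟩
  · intro ξ
    have e : (∑ i, if (refl3 (x i)).1 = ξ then lam i else 0)
        = ∑ i, if (x i).1 = 1 - ξ then lam i else 0 :=
      Finset.sum_congr rfl fun i _ => if_congr
        (by show 1 - (x i).1 = ξ ↔ (x i).1 = 1 - ξ
            constructor <;> intro <;> linarith) rfl rfl
    rw [e]
    exact hx (1 - ξ)
  · intro ξ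
    have e : (∑ i, if (refl3 (x i)).2.1 = ξ then lam i else 0)
        = ∑ i, if (x i).2.1 = 1 - ξ then lam i else 0 :=
      Finset.sum_congr rfl fun i _ => if_congr
        (by show 1 - (x i).2.1 = ξ ↔ (x i).2.1 = 1 - ξ
            constructor <;> intro <;> linarith) rfl rfl
    rw [e]
    exact hy (1 - ξ)
  · intro ξ
    have e : (∑ i, if (refl3 (x i)).2.2 = ξ then lam i else 0)
        = ∑ i, if (x i).2.2 = 1 - ξ then lam i else 0 :=
      Finset.sum_congr rfl fun i _ => if_congr
        (by show 1 - (x i).2.2 = ξ ↔ (x i).2.2 = 1 - ξ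
            constructor <;> intro <;> linarith) rfl rfl
    rw [e]
    exact hz (1 - ξ)

lemma refl3_ratio (f : ℝ → ℝ → ℝ → ℝ) (m : ℕ) (x : Fin m → ℝ × ℝ × ℝ)
    (lam : Fin m → ℝ) :
    pcvRatio m (fun i => refl3 (x i)) lam (rf f) = pcvRatio m x lam f := by
  unfold pcvRatio
  congr 1
  refine Finset.sum_congr rfl fun i _ => ?_
  show lam i * f (1 - (1 - (x i).1)) (1 - (1 - (x i).2.1)) (1 - (1 - (x i).2.2))
    = lam i * f (x i).1 (x i).2.1 (x i).2.2
  rw [sub_sub_cancel, sub_sub_cancel, sub_sub_cancel]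

lemma refl3_opt (f : ℝ → ℝ → ℝ → ℝ) (Sx Sy Sz : Finset ℝ)
    (m : ℕ) (x : Fin m → ℝ × ℝ × ℝ) (lam : Fin m → ℝ)
    (hopt : OptimalPCV Sx Sy Sz f m x lam) :
    OptimalPCV (Sx.image (fun t => 1 - t)) (Sy.image (fun t => 1 - t))
      (Sz.image (fun t => 1 - t)) (rf f) m (fun i => refl3 (x i)) lam := by
  classical
  refine ⟨refl3_pcv m x lam hopt.1, ?_, ?_⟩
  · intro i
    exact ⟨Finset.mem_image_of_mem _ (hopt.2.1 i).1,
      Finset.mem_image_of_mem _ (hopt.2.1 i).2.1,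
      Finset.mem_image_of_mem _ (hopt.2.1 i).2.2⟩
  · intro m' x' lam' hp hq
    have h2 : IsPCV m' (fun i => refl3 (x' i)) lam' := refl3_pcv m' x' lam' hp
    have h3 : PointsIn m' (fun i => refl3 (x' i)) Sx Sy Sz := by
      intro i
      refine ⟨?_, ?_, ?_⟩
      · obtain ⟨s, hs, hst⟩ := Finset.mem_image.1 (hq i).1
        have e : (refl3 (x' i)).1 = s := by
          show 1 - (x' i).1 = s
          rw [← hst]; ring
        rw [e]; exact hs
      · obtain ⟨s, hs, hst⟩ := Finset.mem_image.1 (hq i).2.1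
        have e : (refl3 (x' i)).2.1 = s := by
          show 1 - (x' i).2.1 = s
          rw [← hst]; ring
        rw [e]; exact hs
      · obtain ⟨s, hs, hst⟩ := Finset.mem_image.1 (hq i).2.2
        have e : (refl3 (x' i)).2.2 = s := by
          show 1 - (x' i).2.2 = s
          rw [← hst]; ring
        rw [e]; exact hs
    have hle := hopt.2.2 m' (fun i => refl3 (x' i)) lam' h2 h3
    calc pcvRatio m' x' lam' (rf f)
        = pcvRatio m' (fun i => refl3 (x' i)) lam' f := rfl
      _ ≤ pcvRatio m x lam f := hle
      _ = pcvRatio m (fun i => refl3 (x i)) lam (rf f) := (refl3_ratio f m x lam).symm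

theorem stmt_7 (f : ℝ → ℝ → ℝ → ℝ)
    (hcont : ContinuousOn (fun p : ℝ × ℝ × ℝ => f p.1 p.2.1 p.2.2)
      (Icc (0:ℝ) 1 ×ˢ Icc (0:ℝ) 1 ×ˢ Icc (0:ℝ) 1))
    (hf : StrictMixed f)
    (Sx Sy Sz : Finset ℝ)
    (hSx : (Sx : Set ℝ) ⊆ Icc (0:ℝ) 1) (hSy : (Sy : Set ℝ) ⊆ Icc (0:ℝ) 1)
    (hSz : (Sz : Set ℝ) ⊆ Icc (0:ℝ) 1)
    (h01 : ({0, 1} : Finset ℝ) ⊆ Sx ∩ Sy ∩ Sz)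
    (m : ℕ) (x : Fin m → ℝ × ℝ × ℝ) (lam : Fin m → ℝ)
    (hopt : OptimalPCV Sx Sy Sz f m x lam) :
    (∃ i : Fin m, x i = ((0:ℝ), (0:ℝ), (0:ℝ)) ∧ 0 < lam i) ∧
    (∃ j : Fin m, x j = ((1:ℝ), (1:ℝ), (1:ℝ)) ∧ 0 < lam j) := by
  classical
  refine ⟨key f hf Sx Sy Sz hSx hSy hSz h01 m x lam hopt, ?_⟩
  have h0m : (0:ℝ) ∈ Sx ∩ Sy ∩ Sz := h01 (by simp)
  have h1m : (1:ℝ) ∈ Sx ∩ Sy ∩ Sz := h01 (by simp)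
  simp only [Finset.mem_inter] at h0m h1m
  have himg : ∀ S : Finset ℝ, (S : Set ℝ) ⊆ Icc (0:ℝ) 1 →
      ((S.image (fun t => 1 - t) : Finset ℝ) : Set ℝ) ⊆ Icc (0:ℝ) 1 := by
    intro S hS t ht
    simp only [Finset.coe_image, Set.mem_image, Finset.mem_coe] at ht
    obtain ⟨s, hs, rfl⟩ := ht
    have := hS (Finset.mem_coe.2 hs)
    exact ⟨by linarith [this.1, this.2], by linarith [this.1, this.2]⟩
  have h01' : ({0, 1} : Finset ℝ) ⊆ (Sx.image (fun t => 1 - t))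
      ∩ (Sy.image (fun t => 1 - t)) ∩ (Sz.image (fun t => 1 - t)) := by
    intro t ht
    simp only [Finset.mem_insert, Finset.mem_singleton] at ht
    have mem : ∀ (S : Finset ℝ), (0:ℝ) ∈ S → (1:ℝ) ∈ S →
        t ∈ S.image (fun t => 1 - t) := by
      intro S hS0 hS1
      rcases ht with rfl | rfl
      · exact Finset.mem_image.2 ⟨1, hS1, by norm_num⟩
      · exact Finset.mem_image.2 ⟨0, hS0, by norm_num⟩
    exact Finset.mem_inter.2 ⟨Finset.mem_inter.2
      ⟨mem Sx h0m.1.1 h1m.1.1, mem Sy h0m.1.2 h1m.1.2⟩, mem Sz h0m.2 h1m.2⟩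
  obtain ⟨j, hj, hjpos⟩ := key (rf f) (rf_strict f hf) _ _ _
    (himg Sx hSx) (himg Sy hSy) (himg Sz hSz) h01' m (fun i => refl3 (x i)) lam
    (refl3_opt f Sx Sy Sz m x lam hopt)
  refine ⟨j, ?_, hjpos⟩
  have e1 := congrArg (fun p : ℝ × ℝ × ℝ => p.1) hj
  have e2 := congrArg (fun p : ℝ × ℝ × ℝ => p.2.1) hj
  have e3 := congrArg (fun p : ℝ × ℝ × ℝ => p.2.2) hj
  simp only [refl3] at e1 e2 e3
  have hxj : x j = ((x j).1, (x j).2.1, (x j).2.2) := rfl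
  rw [show (x j).1 = 1 by linarith, show (x j).2.1 = 1 by linarith,
    show (x j).2.2 = 1 by linarith] at hxj
  exact hxj
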